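/- arXiv:2210.04013 — 2 statements merged into one kernel-verified Lean document; each statement's English description precedes it below -/
import Mathlib

section
/- Let c be a GBSC code for (𝒳, p). Then the expected code length of c is at most that of the Shannon code: L(c) = ∑_{x∈𝒳} p(x)·|c(x)| ≤ ∑_{x∈𝒳} p(x)·⌈−log₂ p(x)⌉. That is, GBSC is at least as good as Shannon coding. -/
open Finset

/-- The set of symbols of `X` whose codeword (under `c`) has `w` as a prefix. -/
def codeS {α : Type*} [DecidableEq α] (X : Finset α) (c : α → List Bool)
    (w : List Bool) : Finset α :=
  X.filter fun x => w <+: c x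

/-- The total probability of the symbols of `X` whose codeword has `w` as a prefix. -/
def codeP {α : Type*} [DecidableEq α] (X : Finset α) (p : α → ℝ) (c : α → List Bool)
    (w : List Bool) : ℝ :=
  ∑ x ∈ codeS X c w, p x

/-- `c` is a binary prefix code on `X`: it is injective on `X` and no codeword is a
(proper) prefix of another codeword. -/
def IsPrefixCode {α : Type*} [DecidableEq α] (X : Finset α) (c : α → List Bool) : Prop :=
  Set.InjOn c X ∧ ∀ x ∈ X, ∀ y ∈ X, x ≠ y → ¬ (c x <+: c y)

/-- `c` is a greedy binary separation code (GBSC code) for `(X, p)`: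
it is a prefix code on `X`; whenever `S(w)` is a singleton `{x}`, then `c x = w`; and
whenever `|S(w)| ≥ 2`, the probability split `|P(w0) - P(w1)|` is at most the imbalance of
every binary partition of `S(w)`. -/
def IsGBSC {α : Type*} [DecidableEq α] (X : Finset α) (p : α → ℝ)
    (c : α → List Bool) : Prop :=
  IsPrefixCode X c ∧
  (∀ w : List Bool, ∀ x ∈ X, codeS X c w = {x} → c x = w) ∧
  (∀ w : List Bool, 2 ≤ (codeS X c w).card →
    ∀ A B : Finset α, Disjoint A B → A ∪ B = codeS X c w →
      |codeP X p c (w ++ [false]) - codeP X p c (w ++ [true])| ≤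
        |(∑ x ∈ A, p x) - ∑ x ∈ B, p x|)

section Aux

variable {α : Type*} [DecidableEq α]

lemma codeS_subset_X (X : Finset α) (c : α → List Bool) (w : List Bool) :
    codeS X c w ⊆ X := Finset.filter_subset _ _

lemma mem_codeS {X : Finset α} {c : α → List Bool} {w : List Bool} {x : α} :
    x ∈ codeS X c w ↔ x ∈ X ∧ w <+: c x := Finset.mem_filter

lemma codeS_child_subset (X : Finset α) (c : α → List Bool) (w : List Bool) (b : Bool) :
    codeS X c (w ++ [b]) ⊆ codeS X c w := by
  intro z hz
  rw [mem_codeS] at hz ⊢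
  exact ⟨hz.1, (List.prefix_append w [b]).trans hz.2⟩

lemma two_le_card_codeS {X : Finset α} {p : α → ℝ} {c : α → List Bool}
    (hc : IsGBSC X p c) {x : α} (hx : x ∈ X) {k : ℕ} (hk : k < (c x).length) :
    2 ≤ (codeS X c ((c x).take k)).card := by
  have hxS : x ∈ codeS X c ((c x).take k) := mem_codeS.2 ⟨hx, List.take_prefix k _⟩
  by_contra h
  push_neg at h
  have hsing : codeS X c ((c x).take k) = {x} := by
    apply Finset.eq_singleton_iff_unique_mem.2
    refine ⟨hxS, fun z hz => ?_⟩
    exact Finset.card_le_one.1 (by omega) z hz x hxS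
  have hcx : c x = (c x).take k := hc.2.1 _ x hx hsing
  have : (c x).length = min k (c x).length := by
    conv_lhs => rw [hcx]
    exact List.length_take
  omega

/-- Key consequence of the GBSC balance condition: for any element `y` of the child
`S(w ++ [b])`, twice the child's mass is at most the parent's mass plus `p y`. -/
lemma gbsc_key {X : Finset α} {p : α → ℝ} {c : α → List Bool}
    (hp : ∀ x ∈ X, 0 < p x) (hc : IsGBSC X p c) (w : List Bool) (b : Bool)
    (hcard : 2 ≤ (codeS X c w).card) {y : α} (hy : y ∈ codeS X c (w ++ [b])) :
    2 * codeP X p c (w ++ [b]) ≤ codeP X p c w + p y := by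
  have hdisj : Disjoint (codeS X c (w ++ [false])) (codeS X c (w ++ [true])) := by
    rw [Finset.disjoint_left]
    intro z hz0 hz1
    rw [mem_codeS] at hz0 hz1
    have hcomp := List.prefix_or_prefix_of_prefix hz0.2 hz1.2
    have hlen : (w ++ [false]).length = (w ++ [true]).length := by simp
    rcases hcomp with h | h
    · have := h.eq_of_length hlen
      simp at this
    · have := h.eq_of_length hlen.symm
      simp at this
  have hunion : codeS X c (w ++ [false]) ∪ codeS X c (w ++ [true]) = codeS X c w := by
    apply Finset.Subset.antisymm
    · exact Finset.union_subset (codeS_child_subset X c w false) (codeS_child_subset X c w true)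
    · intro z hz
      rw [mem_codeS] at hz
      obtain ⟨t, ht⟩ := hz.2
      match t with
      | [] =>
        exfalso
        obtain ⟨u, hu, hune⟩ := Finset.exists_mem_ne
          (show 1 < (codeS X c w).card by omega) z
        rw [mem_codeS] at hu
        have hcz : c z = w := by rw [← ht]; simp
        exact hc.1.2 z hz.1 u hu.1 (Ne.symm hune) (hcz ▸ hu.2)
      | tb :: ts =>
        rw [Finset.mem_union]
        cases tb
        · left
          rw [mem_codeS]
          exact ⟨hz.1, ⟨ts, by rw [← ht]; simp⟩⟩
        · right
          rw [mem_codeS]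
          exact ⟨hz.1, ⟨ts, by rw [← ht]; simp⟩⟩
  have hQ : codeP X p c w = codeP X p c (w ++ [false]) + codeP X p c (w ++ [true]) := by
    rw [codeP, codeP, codeP, ← hunion, Finset.sum_union hdisj]
  -- the partition
  set Sb := codeS X c (w ++ [b]) with hSb
  have hsubb : Sb ⊆ codeS X c w := codeS_child_subset X c w b
  set A : Finset α := Sb.erase y with hA
  set B : Finset α := insert y (codeS X c w \ Sb) with hB
  have hABdisj : Disjoint A B := by
    rw [Finset.disjoint_left]
    intro z hzA hzB
    rw [hA, Finset.mem_erase] at hzA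
    rw [hB, Finset.mem_insert, Finset.mem_sdiff] at hzB
    rcases hzB with rfl | ⟨_, hzn⟩
    · exact hzA.1 rfl
    · exact hzn hzA.2
  have hABU : A ∪ B = codeS X c w := by
    ext z
    rw [Finset.mem_union, hA, hB, Finset.mem_erase, Finset.mem_insert, Finset.mem_sdiff]
    constructor
    · rintro (⟨_, hzb⟩ | (rfl | ⟨h1, _⟩))
      · exact hsubb hzb
      · exact hsubb hy
      · exact h1
    · intro hzS
      by_cases hzb : z ∈ Sb
      · by_cases hzy : z = y
        · exact Or.inr (Or.inl hzy)
        · exact Or.inl ⟨hzy, hzb⟩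
      · exact Or.inr (Or.inr ⟨hzS, hzb⟩)
  have hGB := hc.2.2 w hcard A B hABdisj hABU
  have hAsum : ∑ x ∈ A, p x = codeP X p c (w ++ [b]) - p y := by
    rw [codeP, hA]
    have := Finset.sum_erase_add Sb p hy
    linarith
  have hynB : y ∉ codeS X c w \ Sb := by
    rw [Finset.mem_sdiff]
    exact fun h => h.2 hy
  have hBsum : ∑ x ∈ B, p x = codeP X p c w - codeP X p c (w ++ [b]) + p y := by
    rw [hB, Finset.sum_insert hynB]
    have := Finset.sum_sdiff (f := p) hsubb
    rw [codeP, codeP]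
    linarith
  have habs : |2 * codeP X p c (w ++ [b]) - codeP X p c w| ≤
      |2 * codeP X p c (w ++ [b]) - codeP X p c w - 2 * p y| := by
    have h1 : |codeP X p c (w ++ [false]) - codeP X p c (w ++ [true])| =
        |2 * codeP X p c (w ++ [b]) - codeP X p c w| := by
      cases b
      · rw [show codeP X p c (w ++ [false]) - codeP X p c (w ++ [true]) =
          2 * codeP X p c (w ++ [false]) - codeP X p c w by rw [hQ]; ring]
      · rw [show codeP X p c (w ++ [false]) - codeP X p c (w ++ [true]) =
          -(2 * codeP X p c (w ++ [true]) - codeP X p c w) by rw [hQ]; ring, abs_neg]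
    have h2 : |(∑ x ∈ A, p x) - ∑ x ∈ B, p x| =
        |2 * codeP X p c (w ++ [b]) - codeP X p c w - 2 * p y| := by
      rw [hAsum, hBsum]
      congr 1
      ring
    rw [← h1, ← h2]
    exact hGB
  have hpy : 0 < p y := hp y (codeS_subset_X X c (w ++ [b]) hy)
  have hsq : (2 * codeP X p c (w ++ [b]) - codeP X p c w)^2 ≤
      (2 * codeP X p c (w ++ [b]) - codeP X p c w - 2 * p y)^2 := by
    have := pow_le_pow_left₀ (abs_nonneg _) habs 2
    rwa [sq_abs, sq_abs] at this
  nlinarith [hsq, hpy]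

/-- Main induction: if `x` has remaining depth `r + 1` below `(c x).take k`, then
`2 ^ r * p x + (min prob in the node) ≤` the node's mass. -/
lemma gbsc_main {X : Finset α} {p : α → ℝ} {c : α → List Bool}
    (hp : ∀ x ∈ X, 0 < p x) (hc : IsGBSC X p c) :
    ∀ r : ℕ, ∀ x ∈ X, ∀ k : ℕ, k + (r + 1) = (c x).length →
      ∃ y ∈ codeS X c ((c x).take k),
        (∀ z ∈ codeS X c ((c x).take k), p y ≤ p z) ∧
        2 ^ r * p x + p y ≤ codeP X p c ((c x).take k) := by
  intro r
  induction r with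
  | zero =>
    intro x hx k hk
    have hxS : x ∈ codeS X c ((c x).take k) := mem_codeS.2 ⟨hx, List.take_prefix k _⟩
    obtain ⟨y, hyS, hymin⟩ := Finset.exists_min_image (codeS X c ((c x).take k)) p ⟨x, hxS⟩
    refine ⟨y, hyS, hymin, ?_⟩
    have hcard := two_le_card_codeS hc hx (show k < (c x).length by omega)
    obtain ⟨z, hzS, hzx⟩ := Finset.exists_mem_ne
      (show 1 < (codeS X c ((c x).take k)).card by omega) x
    have hpair : ∑ u ∈ ({x, z} : Finset α), p u ≤ codeP X p c ((c x).take k) := by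
      rw [codeP]
      apply Finset.sum_le_sum_of_subset_of_nonneg
      · intro u hu
        rcases Finset.mem_insert.1 hu with rfl | hu
        · exact hxS
        · rwa [Finset.mem_singleton.1 hu]
      · intro u hu _
        exact (hp u (codeS_subset_X X c _ hu)).le
    rw [Finset.sum_pair (Ne.symm hzx)] at hpair
    have := hymin z hzS
    simp only [pow_zero, one_mul]
    linarith
  | succ r ih =>
    intro x hx k hk
    have hkl : k < (c x).length := by omega
    obtain ⟨y', hy'S, hy'min, hy'bound⟩ := ih x hx (k + 1) (by omega)
    have htake : (c x).take (k + 1) = (c x).take k ++ [(c x)[k]] := by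
      rw [List.take_succ, List.getElem?_eq_getElem hkl]
      rfl
    have hcard := two_le_card_codeS hc hx hkl
    have hy'mem : y' ∈ codeS X c ((c x).take k ++ [(c x)[k]]) := htake ▸ hy'S
    have hkey := gbsc_key hp hc ((c x).take k) ((c x)[k]) hcard hy'mem
    rw [← htake] at hkey
    -- P(take k) ≥ 2 * P(take (k+1)) - p y'
    have hxS : x ∈ codeS X c ((c x).take k) := mem_codeS.2 ⟨hx, List.take_prefix k _⟩
    obtain ⟨y, hyS, hymin⟩ := Finset.exists_min_image (codeS X c ((c x).take k)) p ⟨x, hxS⟩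
    refine ⟨y, hyS, hymin, ?_⟩
    have hy'big : y' ∈ codeS X c ((c x).take k) := by
      have : codeS X c ((c x).take (k + 1)) ⊆ codeS X c ((c x).take k) := by
        rw [htake]
        exact codeS_child_subset X c _ _
      exact this hy'S
    have hyle : p y ≤ p y' := hymin y' hy'big
    have : (2 : ℝ) ^ (r + 1) * p x = 2 * (2 ^ r * p x) := by ring
    linarith

end Aux

/-- GBSC is at least as good as Shannon coding: the expected code length of a GBSC code is
at most `∑ p x * ⌈-log₂ (p x)⌉`, the expected length of the Shannon code. -/
theorem gbsc_le_shannon {α : Type*} [DecidableEq α]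
    (X : Finset α) (hX : X.Nonempty) (p : α → ℝ)
    (hp : ∀ x ∈ X, 0 < p x) (hsum : ∑ x ∈ X, p x = 1)
    (c : α → List Bool) (hc : IsGBSC X p c) :
    ∑ x ∈ X, p x * ((c x).length : ℝ) ≤
      ∑ x ∈ X, p x * ((⌈-Real.logb 2 (p x)⌉ : ℤ) : ℝ) := by
  have pointwise : ∀ x ∈ X, ((c x).length : ℤ) ≤ ⌈-Real.logb 2 (p x)⌉ := by
    intro x hx
    have hpx : 0 < p x := hp x hx
    have hpx1 : p x ≤ 1 := by
      rw [← hsum]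
      exact Finset.single_le_sum (fun i hi => (hp i hi).le) hx
    cases hn : (c x).length with
    | zero =>
      simp only [Nat.cast_zero]
      apply Int.ceil_nonneg
      rw [neg_nonneg]
      exact Real.logb_nonpos (by norm_num) hpx.le hpx1
    | succ n =>
      obtain ⟨y, hyS, _, hbound⟩ := gbsc_main hp hc n x hx 0 (by omega)
      have hroot : codeS X c (List.take 0 (c x)) = X := by
        simp [codeS, List.nil_prefix]
      have hrootP : codeP X p c (List.take 0 (c x)) = 1 := by
        rw [codeP, hroot, hsum]
      rw [hrootP] at hbound
      have hpy : 0 < p y := hp y (codeS_subset_X X c _ hyS)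
      have hlt : 2 ^ n * p x < 1 := by linarith
      have hlog : Real.logb 2 (p x) < -(n : ℝ) := by
        rw [Real.logb_lt_iff_lt_rpow (by norm_num) hpx]
        rw [Real.rpow_neg (by norm_num), Real.rpow_natCast]
        rw [inv_eq_one_div, lt_div_iff₀ (by positivity)]
        linarith
      have hceil : (n : ℤ) < ⌈-Real.logb 2 (p x)⌉ := by
        rw [Int.lt_ceil]
        push_cast
        linarith
      push_cast
      push_cast at hceil
      omega
  apply Finset.sum_le_sum
  intro x hx
  apply mul_le_mul_of_nonneg_left _ (hp x hx).le
  have := pointwise x hx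
  exact_mod_cast Int.cast_le.2 this
end

section
/- Let c be a GBSC code for (𝒳, p). Then the expected code length satisfies L(c) < H(X) + 1, where H(X) = ∑_{x∈𝒳} −p(x)·log₂ p(x) is the entropy of the distribution p. -/
open Finset

-- auxiliary lemmas

lemma codeS_mono {α : Type*} [DecidableEq α] (X : Finset α) (c : α → List Bool)
    {w w' : List Bool} (h : w <+: w') : codeS X c w' ⊆ codeS X c w := by
  intro y hy
  simp only [codeS, mem_filter] at *
  exact ⟨hy.1, h.trans hy.2⟩

lemma codeP_split {α : Type*} [DecidableEq α] (X : Finset α) (p : α → ℝ)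
    (c : α → List Bool) (w : List Bool)
    (hw : ∀ y ∈ codeS X c w, c y ≠ w) :
    codeP X p c w = codeP X p c (w ++ [false]) + codeP X p c (w ++ [true]) := by
  have hdisj : Disjoint (codeS X c (w ++ [false])) (codeS X c (w ++ [true])) := by
    rw [Finset.disjoint_left]
    intro a h0 h1
    simp only [codeS, mem_filter] at h0 h1
    obtain ⟨s, hs⟩ := h0.2
    obtain ⟨t, ht⟩ := h1.2
    rw [← ht] at hs
    simp only [List.append_assoc, List.cons_append, List.nil_append] at hs
    have := List.append_cancel_left hs
    simp at this
  have hU : codeS X c w = codeS X c (w ++ [false]) ∪ codeS X c (w ++ [true]) := by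
    ext y
    constructor
    · intro hy
      have hy' := hy
      simp only [codeS, mem_filter] at hy'
      obtain ⟨t, ht⟩ := hy'.2
      match t, ht with
      | [], ht => exact absurd (by simpa using ht.symm) (hw y hy)
      | b :: t', ht =>
        have hb : (w ++ [b]) <+: c y := ⟨t', by simpa using ht⟩
        cases b
        · exact Finset.mem_union_left _ (by simp only [codeS, mem_filter]; exact ⟨hy'.1, hb⟩)
        · exact Finset.mem_union_right _ (by simp only [codeS, mem_filter]; exact ⟨hy'.1, hb⟩)
    · intro hy
      rcases Finset.mem_union.mp hy with h | h
      · exact codeS_mono X c (List.prefix_append w [false]) h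
      · exact codeS_mono X c (List.prefix_append w [true]) h
  rw [codeP, hU, Finset.sum_union hdisj]; rfl

lemma gbsc_step {α : Type*} [DecidableEq α] (X : Finset α) (p : α → ℝ)
    (c : α → List Bool) (hc : IsGBSC X p c) (hp : ∀ x ∈ X, 0 < p x)
    (w : List Bool) (b : Bool) (hcard : 2 ≤ (codeS X c w).card)
    (T : Finset α) (hT : T ⊆ codeS X c (w ++ [b])) (hTne : T.Nonempty) :
    2 * codeP X p c (w ++ [b]) ≤ codeP X p c w + ∑ y ∈ T, p y := by
  obtain ⟨hpc, hsingle, hgreedy⟩ := hc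
  have hne : ∀ y ∈ codeS X c w, c y ≠ w := by
    intro y hy hcy
    obtain ⟨z, hz, hzy⟩ := Finset.exists_mem_ne
      (show 1 < (codeS X c w).card by omega) y
    have hzX : z ∈ X := (Finset.mem_filter.mp hz).1
    have hyX : y ∈ X := (Finset.mem_filter.mp hy).1
    have hpre : w <+: c z := (Finset.mem_filter.mp hz).2
    exact hpc.2 y hyX z hzX hzy.symm (hcy ▸ hpre)
  have hsplit := codeP_split X p c w hne
  have hsub : codeS X c (w ++ [b]) ⊆ codeS X c w := codeS_mono X c (List.prefix_append w [b])
  have hTX : ∀ y ∈ T, y ∈ X := fun y hy => (Finset.mem_filter.mp (hT hy)).1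
  have htpos : 0 < ∑ y ∈ T, p y := Finset.sum_pos (fun y hy => hp y (hTX y hy)) hTne
  set S := codeS X c w with hS
  set S' := codeS X c (w ++ [b]) with hS'
  set A := (S \ S') ∪ T with hA
  set B := S' \ T with hB
  have hab : Disjoint A B := by
    rw [Finset.disjoint_left]
    intro a ha hb
    rcases Finset.mem_union.mp ha with h | h
    · exact (Finset.mem_sdiff.mp h).2 (Finset.mem_sdiff.mp hb).1
    · exact (Finset.mem_sdiff.mp hb).2 h
  have hun : A ∪ B = S := by
    rw [hA, hB, Finset.union_assoc, Finset.union_sdiff_of_subset hT,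
      Finset.sdiff_union_of_subset hsub]
  have hdisjT : Disjoint (S \ S') T := by
    rw [Finset.disjoint_left]
    intro a ha haT
    exact (Finset.mem_sdiff.mp ha).2 (hT haT)
  have hsdiff : ∑ y ∈ S \ S', p y + ∑ y ∈ S', p y = ∑ y ∈ S, p y :=
    Finset.sum_sdiff hsub
  have hsdiffT : ∑ y ∈ S' \ T, p y + ∑ y ∈ T, p y = ∑ y ∈ S', p y :=
    Finset.sum_sdiff hT
  have hAsum : ∑ y ∈ A, p y = ∑ y ∈ S \ S', p y + ∑ y ∈ T, p y :=
    Finset.sum_union hdisjT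
  have hgr := hgreedy w hcard A B hab hun
  set t := ∑ y ∈ T, p y with htdef
  have hSsum : ∑ y ∈ S, p y = codeP X p c w := rfl
  have hS'sum : ∑ y ∈ S', p y = codeP X p c (w ++ [b]) := rfl
  have hRHS : (∑ y ∈ A, p y) - ∑ y ∈ B, p y
      = 2 * t - (2 * codeP X p c (w ++ [b]) - codeP X p c w) := by
    have h1 : ∑ y ∈ S \ S', p y = codeP X p c w - codeP X p c (w ++ [b]) := by linarith
    have h2 : ∑ y ∈ B, p y = codeP X p c (w ++ [b]) - t := by
      rw [hB]; linarith
    rw [hAsum, h1, h2]; ring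
  have hLHS : |codeP X p c (w ++ [false]) - codeP X p c (w ++ [true])|
      = |2 * codeP X p c (w ++ [b]) - codeP X p c w| := by
    cases b
    · have h3 : codeP X p c (w ++ [true])
          = codeP X p c w - codeP X p c (w ++ [false]) := by linarith
      rw [h3]; congr 1; ring
    · have h3 : codeP X p c (w ++ [false])
          = codeP X p c w - codeP X p c (w ++ [true]) := by linarith
      rw [h3, abs_sub_comm]; congr 1; ring
  rw [hLHS, hRHS] at hgr
  have hsq : (2 * codeP X p c (w ++ [b]) - codeP X p c w) ^ 2
      ≤ (2 * t - (2 * codeP X p c (w ++ [b]) - codeP X p c w)) ^ 2 := by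
    have := pow_le_pow_left₀ (abs_nonneg _) hgr 2
    rwa [sq_abs, sq_abs] at this
  nlinarith [hsq, htpos]

lemma gbsc_pointwise {α : Type*} [DecidableEq α] (X : Finset α) (p : α → ℝ)
    (c : α → List Bool) (hp : ∀ x ∈ X, 0 < p x) (hsum : ∑ x ∈ X, p x = 1)
    (hc : IsGBSC X p c) (x : α) (hx : x ∈ X) (hX2 : 2 ≤ X.card) :
    1 ≤ (c x).length ∧ p x * 2 ^ ((c x).length - 1) < 1 := by
  obtain ⟨hpc, hsingle, hgreedy⟩ := hc
  set ℓ := (c x).length with hℓ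
  have hl1 : 1 ≤ ℓ := by
    by_contra h
    have hnil : c x = [] := by
      have : ℓ = 0 := by omega
      exact List.length_eq_zero_iff.mp this
    obtain ⟨y, hy, hyx⟩ := Finset.exists_mem_ne (show 1 < X.card by omega) x
    exact hpc.2 x hx y hy hyx.symm (hnil ▸ List.nil_prefix)
  have hmem : ∀ i, x ∈ codeS X c ((c x).take i) := by
    intro i
    simp only [codeS, mem_filter]
    exact ⟨hx, List.take_prefix i (c x)⟩
  have hcard : ∀ i < ℓ, 2 ≤ (codeS X c ((c x).take i)).card := by
    intro i hi
    by_contra h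
    have h1 : (codeS X c ((c x).take i)).card = 1 := by
      have : 1 ≤ (codeS X c ((c x).take i)).card := Finset.card_pos.mpr ⟨x, hmem i⟩
      omega
    obtain ⟨z, hz⟩ := Finset.card_eq_one.mp h1
    have hxz : x = z := by
      have := hmem i; rw [hz] at this; exact Finset.mem_singleton.mp this
    have := hsingle ((c x).take i) x hx (by rw [hz, hxz])
    have hlen : ℓ = min i ℓ := by
      conv_lhs => rw [hℓ, this]
      simp [List.length_take]
      rfl
    omega
  -- step inequality
  set Q := codeP X p c ((c x).take (ℓ - 1)) - p x with hQ
  have hcard' : 2 ≤ (codeS X c ((c x).take (ℓ - 1))).card := hcard (ℓ - 1) (by omega)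
  have hQpos : 0 < Q := by
    obtain ⟨y, hy, hyx⟩ := Finset.exists_mem_ne
      (show 1 < (codeS X c ((c x).take (ℓ - 1))).card by omega) x
    have hxmem : x ∈ codeS X c ((c x).take (ℓ - 1)) := hmem (ℓ - 1)
    have hsd : ∑ z ∈ codeS X c ((c x).take (ℓ - 1)) \ {x}, p z
        + ∑ z ∈ ({x} : Finset α), p z = ∑ z ∈ codeS X c ((c x).take (ℓ - 1)), p z :=
      Finset.sum_sdiff (Finset.singleton_subset_iff.mpr hxmem)
    have hQeq : Q = ∑ z ∈ codeS X c ((c x).take (ℓ - 1)) \ {x}, p z := by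
      rw [hQ, codeP]
      simp only [Finset.sum_singleton] at hsd
      linarith
    rw [hQeq]
    apply Finset.sum_pos
    · intro z hz
      exact hp z (Finset.mem_filter.mp (Finset.mem_sdiff.mp hz).1).1
    · exact ⟨y, Finset.mem_sdiff.mpr ⟨hy, by simp [hyx]⟩⟩
  set q := min (p x) Q with hq
  have hqpos : 0 < q := lt_min (hp x hx) hQpos
  have hstep : ∀ i, i + 1 < ℓ →
      2 * codeP X p c ((c x).take (i + 1)) ≤ codeP X p c ((c x).take i) + q := by
    intro i hi
    have hib : i < ℓ := by omega
    obtain ⟨bi, hbi⟩ : ∃ b, (c x).take (i + 1) = (c x).take i ++ [b] := by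
      refine ⟨(c x).get ⟨i, hib⟩, ?_⟩
      rw [List.take_succ]
      congr 1
      rw [List.getElem?_eq_getElem hib]
      rfl
    have hsubℓ : codeS X c ((c x).take (ℓ - 1)) ⊆ codeS X c ((c x).take (i + 1)) := by
      apply codeS_mono
      have : (c x).take (i + 1) = ((c x).take (ℓ - 1)).take (i + 1) := by
        rw [List.take_take]
        congr 1
        omega
      rw [this]
      exact List.take_prefix _ _
    -- with T = {x}
    have h1 : 2 * codeP X p c ((c x).take (i + 1)) ≤ codeP X p c ((c x).take i) + p x := by
      have := gbsc_step X p c ⟨hpc, hsingle, hgreedy⟩ hp ((c x).take i) bi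
        (hcard i hib) {x} (by rw [← hbi]; exact Finset.singleton_subset_iff.mpr (hmem (i+1)))
        ⟨x, Finset.mem_singleton_self x⟩
      rw [← hbi] at this
      simpa using this
    -- with T = S(ℓ-1) \ {x}
    have h2 : 2 * codeP X p c ((c x).take (i + 1)) ≤ codeP X p c ((c x).take i) + Q := by
      set T := codeS X c ((c x).take (ℓ - 1)) \ {x} with hT
      have hTsub : T ⊆ codeS X c ((c x).take i ++ [bi]) := by
        rw [← hbi]
        exact (Finset.sdiff_subset).trans hsubℓ
      have hTne : T.Nonempty := by
        obtain ⟨y, hy, hyx⟩ := Finset.exists_mem_ne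
          (show 1 < (codeS X c ((c x).take (ℓ - 1))).card by omega) x
        exact ⟨y, Finset.mem_sdiff.mpr ⟨hy, by simp [hyx]⟩⟩
      have hTsum : ∑ y ∈ T, p y = Q := by
        have hsd : ∑ z ∈ T, p z + ∑ z ∈ ({x} : Finset α), p z
            = ∑ z ∈ codeS X c ((c x).take (ℓ - 1)), p z :=
          Finset.sum_sdiff (Finset.singleton_subset_iff.mpr (hmem (ℓ - 1)))
        simp only [Finset.sum_singleton] at hsd
        rw [hQ, codeP]
        linarith
      have := gbsc_step X p c ⟨hpc, hsingle, hgreedy⟩ hp ((c x).take i) bi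
        (hcard i hib) T hTsub hTne
      rw [← hbi, hTsum] at this
      exact this
    rcases le_total (p x) Q with h | h
    · rw [hq, min_eq_left h]; exact h1
    · rw [hq, min_eq_right h]; exact h2
  -- telescoping
  have htel : ∀ k, k ≤ ℓ - 1 →
      (2 : ℝ) ^ k * codeP X p c ((c x).take k) ≤
        codeP X p c ((c x).take 0) + ((2 : ℝ) ^ k - 1) * q := by
    intro k
    induction k with
    | zero => intro _; simp
    | succ n ih =>
      intro hn
      have hn' : n ≤ ℓ - 1 := by omega
      have hstepn := hstep n (by omega)
      have ihn := ih hn'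
      have h2n : (0 : ℝ) < 2 ^ n := by positivity
      calc (2 : ℝ) ^ (n + 1) * codeP X p c ((c x).take (n + 1))
          = 2 ^ n * (2 * codeP X p c ((c x).take (n + 1))) := by ring
        _ ≤ 2 ^ n * (codeP X p c ((c x).take n) + q) := by
            apply mul_le_mul_of_nonneg_left hstepn (le_of_lt h2n)
        _ = 2 ^ n * codeP X p c ((c x).take n) + 2 ^ n * q := by ring
        _ ≤ codeP X p c ((c x).take 0) + (2 ^ n - 1) * q + 2 ^ n * q := by linarith
        _ = codeP X p c ((c x).take 0) + (2 ^ (n + 1) - 1) * q := by ring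
  have hP0 : codeP X p c ((c x).take 0) = 1 := by
    rw [List.take_zero, codeP]
    have : codeS X c [] = X := Finset.filter_true_of_mem (fun y _ => List.nil_prefix)
    rw [this, hsum]
  have hfin := htel (ℓ - 1) le_rfl
  rw [hP0] at hfin
  have hPl : codeP X p c ((c x).take (ℓ - 1)) = p x + Q := by rw [hQ]; ring
  rw [hPl] at hfin
  have hqQ : q ≤ Q := min_le_right _ _
  have h2l : (1 : ℝ) ≤ 2 ^ (ℓ - 1) := one_le_pow₀ (by norm_num)
  refine ⟨hl1, ?_⟩
  nlinarith [hfin, hqQ, hQpos, hqpos, h2l]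

/-- The expected code length of a GBSC code is less than `H(X) + 1`, where
`H(X) = ∑ -p x * log₂ (p x)` is the entropy of the distribution `p`. -/
theorem gbsc_lt_entropy_add_one {α : Type*} [DecidableEq α]
    (X : Finset α) (hX : X.Nonempty) (p : α → ℝ)
    (hp : ∀ x ∈ X, 0 < p x) (hsum : ∑ x ∈ X, p x = 1)
    (c : α → List Bool) (hc : IsGBSC X p c) :
    ∑ x ∈ X, p x * ((c x).length : ℝ) <
      (∑ x ∈ X, -(p x * Real.logb 2 (p x))) + 1 := by
  rcases eq_or_lt_of_le (show 1 ≤ X.card from Finset.card_pos.mpr hX) with h1 | h2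
  · -- X.card = 1
    obtain ⟨x, hXx⟩ := Finset.card_eq_one.mp h1.symm
    have hxX : x ∈ X := by rw [hXx]; exact Finset.mem_singleton_self x
    have hpx : p x = 1 := by rw [hXx, Finset.sum_singleton] at hsum; exact hsum
    have hcx : c x = [] := by
      apply hc.2.1 [] x hxX
      rw [show codeS X c [] = X from Finset.filter_true_of_mem
        (fun y _ => List.nil_prefix), hXx]
    rw [hXx]
    simp [hcx, hpx]
  · -- 2 ≤ X.card
    have hX2 : 2 ≤ X.card := h2
    have key : ∀ x ∈ X, p x * ((c x).length : ℝ) < -(p x * Real.logb 2 (p x)) + p x := by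
      intro x hx
      obtain ⟨hl1, hlt⟩ := gbsc_pointwise X p c hp hsum hc x hx hX2
      set k := (c x).length - 1 with hk
      have hlen : (c x).length = k + 1 := by omega
      have hpx := hp x hx
      have h2k : (0 : ℝ) < 2 ^ k := by positivity
      have hplt : p x < 1 / 2 ^ k := by
        rw [lt_div_iff₀ h2k]; exact hlt
      have hlog : Real.logb 2 (p x) < -(k : ℝ) := by
        have h := Real.logb_lt_logb (by norm_num : (1:ℝ) < 2) hpx hplt
        rw [one_div, Real.logb_inv, Real.logb_pow] at h
        have hb : Real.logb 2 2 = 1 := by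
          simp [Real.logb_self_eq_one]
        rw [hb, mul_one] at h
        exact h
      have hcast : ((c x).length : ℝ) = (k : ℝ) + 1 := by
        rw [hlen]; push_cast; ring
      rw [hcast]
      nlinarith [hpx, hlog]
    calc ∑ x ∈ X, p x * ((c x).length : ℝ)
        < ∑ x ∈ X, (-(p x * Real.logb 2 (p x)) + p x) :=
          Finset.sum_lt_sum_of_nonempty hX key
      _ = (∑ x ∈ X, -(p x * Real.logb 2 (p x))) + 1 := by
          rw [Finset.sum_add_distrib, hsum]
end
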